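/- Define g : [0,∞) → ℝ by g(x) = (x+1)·ln(x+1) − x·ln x for x > 0 and g(0) = 0, and f : [1,∞) → ℝ by f(x) = ((x+1)/2)·ln((x+1)/2) − ((x−1)/2)·ln((x−1)/2) for x > 1 and f(1) = 0. Then for every natural number K ≥ 1, as E → 0⁺, K·g(E) − f(1 + 2·K·E) = K·(ln K)·E + O(E²); that is, the function E ↦ K·g(E) − f(1+2K·E) − K·(ln K)·E is O(E²) with respect to the filter of punctured right-neighborhoods of 0. -/

import Mathlib

open Filter Topology Asymptotics

/-- The Gordon function `g(x) = (x+1)·ln(x+1) − x·ln x` (with `g 0 = 0`, which holds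
automatically since `Real.log 0 = 0`). -/
noncomputable def gordon (x : ℝ) : ℝ := (x + 1) * Real.log (x + 1) - x * Real.log x

/-- The Gaussian-state entropy function
`f(x) = ((x+1)/2)·ln((x+1)/2) − ((x−1)/2)·ln((x−1)/2)` (with `f 1 = 0`, which holds
automatically since `Real.log 0 = 0`). -/
noncomputable def entF (x : ℝ) : ℝ :=
  (x + 1) / 2 * Real.log ((x + 1) / 2) - (x - 1) / 2 * Real.log ((x - 1) / 2)

lemma phi_bounds {x : ℝ} (hx : 0 ≤ x) :
    x ≤ (1 + x) * Real.log (1 + x) ∧ (1 + x) * Real.log (1 + x) ≤ x + x ^ 2 := by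
  have h1 : (0:ℝ) < 1 + x := by linarith
  constructor
  · have h2 : Real.log (1 + x)⁻¹ ≤ (1 + x)⁻¹ - 1 :=
      Real.log_le_sub_one_of_pos (by positivity)
    rw [Real.log_inv] at h2
    have h3 : 1 - (1 + x)⁻¹ ≤ Real.log (1 + x) := by linarith
    have h4 : (1 + x) * (1 - (1 + x)⁻¹) ≤ (1 + x) * Real.log (1 + x) :=
      mul_le_mul_of_nonneg_left h3 (le_of_lt h1)
    have h5 : (1 + x) * (1 - (1 + x)⁻¹) = x := by
      field_simp
      ring
    linarith
  · have h2 : Real.log (1 + x) ≤ (1 + x) - 1 := Real.log_le_sub_one_of_pos h1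
    have h3 : (1 + x) * Real.log (1 + x) ≤ (1 + x) * x := by
      apply mul_le_mul_of_nonneg_left _ (le_of_lt h1)
      linarith
    nlinarith

/-- Low-energy expansion of the quantum error exponent lower bound:
`K·g(E) − f(1+2KE) = K·(ln K)·E + O(E²)` as `E → 0⁺`. -/
theorem quantum_exponent_expansion (K : ℕ) (hK : 1 ≤ K) :
    (fun E : ℝ =>
        (K : ℝ) * gordon E - entF (1 + 2 * (K : ℝ) * E) -
          (K : ℝ) * Real.log (K : ℝ) * E) =O[𝓝[>] (0 : ℝ)]
      fun E : ℝ => E ^ 2 := by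
  have hKpos : (0:ℝ) < K := by exact_mod_cast hK
  rw [isBigO_iff]
  refine ⟨(K : ℝ) + (K : ℝ) ^ 2, ?_⟩
  filter_upwards [self_mem_nhdsWithin] with E (hE : 0 < E)
  have hKE : 0 < (K:ℝ) * E := by positivity
  have key : (K : ℝ) * gordon E - entF (1 + 2 * (K : ℝ) * E) -
      (K : ℝ) * Real.log (K : ℝ) * E
      = ((K:ℝ) * ((1 + E) * Real.log (1 + E)) - (K:ℝ) * E)
        - ((1 + (K:ℝ) * E) * Real.log (1 + (K:ℝ) * E) - (K:ℝ) * E) := by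
    simp only [gordon, entF]
    have e1 : (1 + 2 * (K : ℝ) * E + 1) / 2 = 1 + (K:ℝ) * E := by ring
    have e2 : (1 + 2 * (K : ℝ) * E - 1) / 2 = (K:ℝ) * E := by ring
    rw [e1, e2, Real.log_mul (ne_of_gt hKpos) (ne_of_gt hE)]
    ring_nf
  rw [key]
  have hb1 := phi_bounds (le_of_lt hE)
  have hb2 := phi_bounds (le_of_lt hKE)
  have hnn1 : 0 ≤ (1 + E) * Real.log (1 + E) - E := by linarith [hb1.1]
  have hnn2 : 0 ≤ (1 + (K:ℝ) * E) * Real.log (1 + (K:ℝ) * E) - (K:ℝ) * E := by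
    linarith [hb2.1]
  have hub1 : (1 + E) * Real.log (1 + E) - E ≤ E ^ 2 := by linarith [hb1.2]
  have hub2 : (1 + (K:ℝ) * E) * Real.log (1 + (K:ℝ) * E) - (K:ℝ) * E ≤ ((K:ℝ) * E) ^ 2 := by
    linarith [hb2.2]
  simp only [Real.norm_eq_abs]
  rw [abs_of_nonneg (le_of_lt (pow_pos hE 2))]
  rw [abs_le]
  constructor
  · nlinarith
  · nlinarith
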